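/- Let V be a finite-dimensional real vector space, h ≥ 1, and consider on W = (V × ℝʰ) ⊕ (V* × ℝʰ) the endomorphism Φ built from the block data A = (F,0;0,0), ♯_π = (♯_P, −ᵗZ; Z, 0), ♭_σ = (♭_θ, −ᵗξ; ξ, 0), where F ∈ End(V), P a skew bivector, θ a skew 2-form, Z = (Zₐ) h vectors in V, ξ = (ξᵃ) h covectors. Then Φ² = −Id if and only if: P(α∘F,β)=P(α,β∘F); θ(FX,Y)=θ(X,FY); F(Zₐ)=0; ξᵃ∘F=0; i(Zₐ)θ=0; i(ξᵃ)P=0; ξᵃ(Z_b)=δᵃ_b; and F² = −Id − ♯_P∘♭_θ + Σₐ ξᵃ ⊗ Zₐ. -/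
import Mathlib


open scoped BigOperators

/-- The endomorphism `Φ` of the stable big space `(V × ℝʰ) ⊕ (V* × ℝʰ)` built
from the strictly classical block data
`A = (F,0;0,0)`, `♯_π = (♯_P, −ᵗZ; Z, 0)`, `♭_σ = (♭_θ, −ᵗξ; ξ, 0)`:
`Φ((X,u)⊕(α,v)) = (A(X,u) + ♯_π(α,v)) ⊕ (♭_σ(X,u) − ᵗA(α,v))`. -/
noncomputable def PhiGAC {V : Type*} [AddCommGroup V] [Module ℝ V] {h : ℕ}
    (F : V →ₗ[ℝ] V) (sP : Module.Dual ℝ V →ₗ[ℝ] V)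
    (bθ : V →ₗ[ℝ] Module.Dual ℝ V) (Z : Fin h → V)
    (ξ : Fin h → Module.Dual ℝ V)
    (p : (V × (Fin h → ℝ)) × (Module.Dual ℝ V × (Fin h → ℝ))) :
    (V × (Fin h → ℝ)) × (Module.Dual ℝ V × (Fin h → ℝ)) :=
  ((F p.1.1 + sP p.2.1 - ∑ a, p.2.2 a • Z a, fun a => p.2.1 (Z a)),
   (bθ p.1.1 - ∑ a, p.1.2 a • ξ a - F.dualMap p.2.1, fun a => ξ a p.1.1))

/-- `Φ² = −Id` holds if and only if the algebraic conditions of a generalized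
almost contact structure of codimension `h` hold:
compatibility of `P` and `θ` with `F`, `F(Zₐ)=0`, `ξᵃ∘F=0`, `i(Zₐ)θ=0`,
`i(ξᵃ)P=0`, `ξᵃ(Z_b)=δᵃ_b`, and `F² = −Id − ♯_P∘♭_θ + Σₐ ξᵃ ⊗ Zₐ`. -/
theorem stmt11 (V : Type*) [AddCommGroup V] [Module ℝ V] (h : ℕ)
    (F : V →ₗ[ℝ] V) (sP : Module.Dual ℝ V →ₗ[ℝ] V)
    (hP : ∀ α β : Module.Dual ℝ V, β (sP α) = -α (sP β))
    (bθ : V →ₗ[ℝ] Module.Dual ℝ V) (hθ : ∀ X Y : V, bθ X Y = -bθ Y X)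
    (Z : Fin h → V) (ξ : Fin h → Module.Dual ℝ V) :
    (∀ p, PhiGAC F sP bθ Z ξ (PhiGAC F sP bθ Z ξ p) = -p) ↔
      ((∀ α β : Module.Dual ℝ V, β (sP (F.dualMap α)) = (F.dualMap β) (sP α)) ∧
       (∀ X Y : V, bθ (F X) Y = bθ X (F Y)) ∧
       (∀ a, F (Z a) = 0) ∧
       (∀ a, ∀ X : V, ξ a (F X) = 0) ∧
       (∀ a, bθ (Z a) = 0) ∧
       (∀ a, sP (ξ a) = 0) ∧
       (∀ a b, ξ a (Z b) = if a = b then (1 : ℝ) else 0) ∧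
       (∀ X : V, F (F X) = -X - sP (bθ X) + ∑ a, ξ a X • Z a)) := by

  have sep : ∀ v : V, (∀ φ : Module.Dual ℝ V, φ v = 0) → v = 0 := fun v hv =>
    (Module.forall_dual_apply_eq_zero_iff ℝ v).mp hv
  constructor
  · intro H
    have hx := fun X : V => H ((X, 0), (0, 0))
    have ha := fun α : Module.Dual ℝ V => H ((0, 0), (α, 0))
    have hu := fun u : Fin h → ℝ => H ((0, u), (0, 0))
    simp only [PhiGAC, Prod.mk.injEq, Prod.neg_mk, map_zero, neg_zero, zero_smul,
      Finset.sum_const_zero, sub_zero, add_zero, zero_add, zero_sub, map_neg, map_add,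
      map_sub, LinearMap.zero_apply, Pi.zero_apply, Finset.sum_neg_distrib] at hx ha hu
    -- conditions
    have c3 : ∀ a, F (Z a) = 0 := by
      intro a
      refine sep _ fun α => ?_
      have := congrFun (ha α).1.2 a
      simpa [LinearMap.dualMap_apply] using this
    have c4 : ∀ a, ∀ X : V, ξ a (F X) = 0 := by
      intro a X
      have := congrFun (hx X).2.2 a
      simpa using this
    have c5 : ∀ a, bθ (Z a) = 0 := by
      intro a
      ext Y
      have := congrFun (hx Y).1.2 a
      simpa [hθ Y (Z a), neg_eq_zero] using this
    have c6 : ∀ a, sP (ξ a) = 0 := by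
      intro a
      refine sep _ fun α => ?_
      have h4 := congrFun (ha α).2.2 a
      have : ξ a (sP α) = 0 := by simpa using h4
      have := (hP α (ξ a)).symm.trans this
      linarith [hP (ξ a) α, this]
    have c7 : ∀ a b, ξ a (Z b) = if a = b then (1 : ℝ) else 0 := by
      intro a b
      have := congrFun (hu (Pi.single a 1)).1.2 b
      simp only [LinearMap.neg_apply, LinearMap.sum_apply, LinearMap.smul_apply, smul_eq_mul,
        Pi.neg_apply, neg_inj, Pi.single_apply, ite_mul, one_mul, zero_mul,
        Finset.sum_ite_eq', Finset.mem_univ, if_true] at this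
      rw [this]
      simp [eq_comm]
    have hFsP : ∀ α, F (sP α) = sP (F.dualMap α) := by
      intro α
      have h1 := (ha α).1.1
      exact sub_eq_zero.mp (by simpa [sub_eq_add_neg] using h1)
    have c1 : ∀ α β : Module.Dual ℝ V, β (sP (F.dualMap α)) = (F.dualMap β) (sP α) := by
      intro α β
      rw [← hFsP α, LinearMap.dualMap_apply]
    have c2 : ∀ X Y : V, bθ (F X) Y = bθ X (F Y) := by
      intro X Y
      have h3 := (hx X).2.1
      have := LinearMap.congr_fun (sub_eq_zero.mp h3) Y
      simpa [LinearMap.dualMap_apply] using this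
    have c8 : ∀ X : V, F (F X) = -X - sP (bθ X) + ∑ a, ξ a X • Z a := by
      intro X
      have h1 := (hx X).1.1
      have : F (F X) + sP (bθ X) - ∑ a, ξ a X • Z a = -X := h1
      linear_combination (norm := module) this
    exact ⟨c1, c2, c3, c4, c5, c6, c7, c8⟩
  · rintro ⟨c1, c2, c3, c4, c5, c6, c7, c8⟩ ⟨⟨X, u⟩, α, v⟩
    have hFsP : ∀ α, sP (F.dualMap α) = F (sP α) := by
      intro α
      refine sub_eq_zero.mp (sep _ fun β => ?_)
      simp [map_sub, c1 α β, LinearMap.dualMap_apply]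
    have hc6' : ∀ (a) (β : Module.Dual ℝ V), ξ a (sP β) = 0 := by
      intro a β
      have := hP β (ξ a)
      rw [c6 a] at this
      simpa using this
    have e1 : F (F X + sP α - ∑ a, v a • Z a) + sP (bθ X - ∑ a, u a • ξ a - F.dualMap α)
        - ∑ a, ξ a X • Z a = -X := by
      rw [map_sub, map_add, map_sub, map_sub, map_sum, map_sum]
      simp only [map_smul, c3, c6, smul_zero, Finset.sum_const_zero, hFsP]
      rw [c8 X]
      module
    have e2 : ∀ a, (bθ X - ∑ b, u b • ξ b - F.dualMap α) (Z a) = -u a := by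
      intro a
      have : bθ X (Z a) = 0 := by rw [hθ, c5]; simp
      simp [LinearMap.sub_apply, LinearMap.sum_apply, this, LinearMap.dualMap_apply, c3,
        LinearMap.smul_apply, c7, Finset.sum_ite_eq', smul_eq_mul]
    have e3 : bθ (F X + sP α - ∑ a, v a • Z a) - ∑ a, α (Z a) • ξ a
        - F.dualMap (bθ X - ∑ a, u a • ξ a - F.dualMap α) = -α := by
      ext Y
      simp only [map_sub, map_add, map_sum, map_smul, c5, smul_zero, Finset.sum_const_zero,
        LinearMap.sub_apply, LinearMap.add_apply, LinearMap.sum_apply, LinearMap.smul_apply,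
        LinearMap.dualMap_apply, LinearMap.neg_apply, smul_eq_mul, sub_zero]
      rw [c2 X Y, c8 Y]
      have hbsp : bθ (sP α) Y = α (sP (bθ Y)) := by
        rw [hθ]
        have := hP α (bθ Y)
        linarith
      simp only [map_add, map_sub, map_neg, map_sum, map_smul, smul_eq_mul, c4]
      rw [hbsp]
      simp only [Finset.sum_const_zero, zero_sub, mul_comm]
      ring_nf
      simp [mul_comm]
    have e4 : ∀ a, ξ a (F X + sP α - ∑ b, v b • Z b) = -v a := by
      intro a
      simp [map_sub, map_add, map_sum, map_smul, c4, hc6', c7, Finset.sum_ite_eq',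
        smul_eq_mul]
    simp only [PhiGAC, Prod.neg_mk, Prod.mk.injEq]
    refine ⟨⟨?_, funext e2⟩, ?_, funext e4⟩
    · simpa using e1
    · simpa using e3
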